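/- Let n ≥ 3 with n not divisible by 4, let C_n be the cycle graph on n vertices, let S be a multiset of positive integers with |S| = n, and let k be a nonnegative integer. Then C_n is S-fair with fairness constant k if and only if k is even, k/2 ≥ 1, and S equals the multiset consisting of the single value k/2 repeated n times. -/

import Mathlib

open scoped Classical

/-- Sum of labels over the open neighborhood of `v`. -/
noncomputable def nbrSum {V : Type*} [Fintype V] (G : SimpleGraph V) (f : V → ℕ) (v : V) : ℕ :=
  ∑ u : V, if G.Adj v u then f u else 0

/-- `f` is a bijective labeling of `G` by the multiset `S` witnessing fairness constant `k`. -/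
def IsFairLabeling {V : Type*} [Fintype V] (G : SimpleGraph V) (S : Multiset ℕ)
    (f : V → ℕ) (k : ℕ) : Prop :=
  Finset.univ.val.map f = S ∧ ∀ v : V, nbrSum G f v = k

/-- `G` is `S`-fair. -/
def IsFair {V : Type*} [Fintype V] (G : SimpleGraph V) (S : Multiset ℕ) : Prop :=
  ∃ (f : V → ℕ) (k : ℕ), IsFairLabeling G S f k

theorem nbrSum_cycle (n : ℕ) (f : Fin (n+3) → ℕ) (v : Fin (n+3)) :
    nbrSum (SimpleGraph.cycleGraph (n+3)) f v = f (v-1) + f (v+1) := by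
  classical
  have h1 : nbrSum (SimpleGraph.cycleGraph (n+3)) f v
      = ∑ u ∈ (SimpleGraph.cycleGraph (n+3)).neighborFinset v, f u := by
    rw [nbrSum, SimpleGraph.neighborFinset_eq_filter, Finset.sum_filter]
    exact Finset.sum_congr rfl fun a _ => by split_ifs <;> tauto
  have hne : v - 1 ≠ v + 1 := by
    intro h
    rw [sub_eq_iff_eq_add] at h
    have h2 := congrArg Fin.val h
    have hv := v.isLt
    simp only [Fin.val_add, Fin.val_one] at h2
    by_cases hc : v.val + 1 < n + 3
    · rw [Nat.mod_eq_of_lt hc] at h2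
      by_cases hc2 : v.val + 1 + 1 < n + 3
      · rw [Nat.mod_eq_of_lt hc2] at h2; omega
      · rw [show v.val + 1 + 1 = n + 3 by omega, Nat.mod_self] at h2; omega
    · rw [show v.val + 1 = n + 3 by omega, Nat.mod_self] at h2
      rw [Nat.mod_eq_of_lt (by omega)] at h2; omega
  rw [h1, show ((SimpleGraph.cycleGraph (n+2+1)).neighborFinset v : Finset (Fin (n+2+1)))
      = {v - 1, v + 1} from SimpleGraph.cycleGraph_neighborFinset, Finset.sum_pair hne]

/-- for `n ≥ 3` not divisible by `4`, the cycle `C_n` is `S`-fair with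
fairness constant `k` iff `k` is even, `k/2 ≥ 1`, and `S` consists of the single value
`k/2` repeated `n` times. -/
theorem stmt_9 (n : ℕ) (hn : 3 ≤ n) (hndvd : ¬ 4 ∣ n)
    (S : Multiset ℕ) (hSpos : ∀ s ∈ S, 0 < s) (hScard : Multiset.card S = n) (k : ℕ) :
    (∃ f, IsFairLabeling (SimpleGraph.cycleGraph n) S f k) ↔
      2 ∣ k ∧ 1 ≤ k / 2 ∧ S = Multiset.replicate n (k / 2) := by
  obtain ⟨m, rfl⟩ : ∃ m, n = m + 3 := ⟨n - 3, by omega⟩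
  set N := m + 3 with hN
  constructor
  · rintro ⟨f, hmap, hsum⟩
    -- neighbor sums
    have H : ∀ v : Fin N, f v + f (v + 2) = k := by
      intro v
      have := hsum (v + 1)
      rw [nbrSum_cycle] at this
      have e : (1 : Fin N) + 1 = 2 := by open Fin.CommRing in ring
      rwa [add_sub_cancel_right, add_assoc, e] at this
    have h4 : ∀ v : Fin N, f (v + 2 + 2) = f v := by
      intro v
      have h1 := H v
      have h2 := H (v + 2)
      omega
    open Fin.NatCast Fin.CommRing in
    have hind : ∀ (t : ℕ) (v : Fin N), f (v + ((4 * t : ℕ) : Fin N)) = f v := by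
      intro t
      induction t with
      | zero => intro v; simp
      | succ t ih =>
          intro v
          have hc : ((4 * (t + 1) : ℕ) : Fin N) = ((4 * t : ℕ) : Fin N) + 2 + 2 := by
            rw [show 4 * (t + 1) = 4 * t + 2 + 2 by ring, Nat.cast_add, Nat.cast_add, Nat.cast_ofNat]
          rw [hc, ← add_assoc, ← add_assoc, h4]
          exact ih v
    -- find t, c with 4*t+2 = N*c
    obtain ⟨t, c, htc⟩ : ∃ t c, 4 * t + 2 = N * c := by
      have h4m : N % 4 ≠ 0 := by
        intro h; exact hndvd (Nat.dvd_of_mod_eq_zero h)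
      have hcases : N % 4 = 1 ∨ N % 4 = 2 ∨ N % 4 = 3 := by omega
      have hdiv2 : 2 * (N / 2) + N % 2 = N := by omega
      rcases hcases with h | h | h
      · exact ⟨N / 2, 2, by omega⟩
      · exact ⟨(N - 2) / 4, 1, by omega⟩
      · exact ⟨N / 2, 2, by omega⟩
    open Fin.NatCast Fin.CommRing in
    have hzero : ((4 * t + 2 : ℕ) : Fin N) = 0 := by
      rw [htc]
      show ((N * c : ℕ) : Fin N) = 0
      rw [Nat.cast_mul, Fin.natCast_self, zero_mul]
    open Fin.NatCast Fin.CommRing in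
    have hkey : ∀ v : Fin N, f (v + 2) = f v := by
      intro v
      have h1 : f (v + ((4 * t + 2 : ℕ) : Fin N)) = f v := by rw [hzero, add_zero]
      have h2 : ((4 * t + 2 : ℕ) : Fin N) = ((4 * t : ℕ) : Fin N) + 2 := by rw [Nat.cast_add, Nat.cast_ofNat]
      rw [h2, ← add_assoc] at h1  -- wrong assoc direction? v + (a + 2) = v + a + 2
      have h3 : f (v + ((4 * t : ℕ) : Fin N) + 2) = f (v + 2 + ((4 * t : ℕ) : Fin N)) := by
        rw [add_right_comm]
      rw [h3, hind t (v + 2)] at h1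
      exact h1
    have hconst : ∀ v : Fin N, 2 * f v = k := by
      intro v
      have h1 := H v
      rw [hkey v] at h1
      omega
    have v0 : Fin N := ⟨0, by omega⟩
    have hk2 : 2 ∣ k := ⟨f v0, (hconst v0).symm⟩
    have hfval : ∀ v : Fin N, f v = k / 2 := by
      intro v
      have := hconst v
      omega
    have hSrep : S = Multiset.replicate N (k / 2) := by
      rw [← hmap]
      rw [Multiset.map_congr rfl (fun v _ => hfval v), Multiset.map_const']
      congr 1
      simp
    refine ⟨hk2, ?_, hSrep⟩
    have hmem : (k / 2) ∈ S := by
      rw [hSrep]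
      exact Multiset.mem_replicate.mpr ⟨by omega, rfl⟩
    exact hSpos _ hmem
  · rintro ⟨hk2, hk1, hSrep⟩
    refine ⟨fun _ => k / 2, ?_, ?_⟩
    · rw [hSrep, Multiset.map_const']
      congr 1
      simp
    · intro v
      rw [nbrSum_cycle]
      obtain ⟨j, rfl⟩ := hk2
      omega
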